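/- Let G be a locally compact group with left invariant Haar measure μ and B a Banach space. Let Γ ⊆ L^1(G;B) be bounded and let S ⊆ G be compact. Assume that for every ε > 0 there exists j ∈ L^∞(G) with compact support such that ‖f − j⋆f‖_{1;G} < ε for every f ∈ Γ. Then the set Γ⁻ := {f⁻ : f ∈ Γ} is uniformly integrable on S. -/

import Mathlib

open MeasureTheory ENNReal Set Topology Function Pointwise

section Aux

variable {G : Type*} [Group G] [TopologicalSpace G] [IsTopologicalGroup G]
    [LocallyCompactSpace G] [T2Space G] [MeasurableSpace G] [BorelSpace G]

/-- Functional form of the comparison between a right Haar measure `𝔥.inv` and the left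
Haar measure `𝔥`, on continuous functions supported in a fixed compact set. -/
theorem aux_fun_ineq (𝔥 : Measure G) [𝔥.IsHaarMeasure] [𝔥.Regular]
    {K' : Set G} (hK' : IsCompact K') :
    ∃ c : ℝ, 0 ≤ c ∧ ∀ f : G → ℝ, Continuous f → HasCompactSupport f → (∀ x, 0 ≤ f x) →
      tsupport f ⊆ K' → ∫ x, f x ∂𝔥.inv ≤ c * ∫ x, f x ∂𝔥 := by
  rcases K'.eq_empty_or_nonempty with rfl | hne
  · refine ⟨0, le_rfl, fun f hf h'f hf0 hsupp => ?_⟩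
    have hzero : ∀ x, f x = 0 := fun x =>
      image_eq_zero_of_notMem_tsupport (by simp [Set.subset_empty_iff.mp hsupp])
    simp [funext hzero]
  obtain ⟨V, hVc, hV1⟩ := exists_compact_mem_nhds (1 : G)
  have h1V : (1 : G) ∈ interior V := mem_interior_iff_mem_nhds.2 hV1
  obtain ⟨g0, g_one, g_zero, g_comp, g_mem⟩ :=
    exists_continuous_one_zero_of_isCompact (isCompact_singleton (x := (1 : G)))
      isOpen_interior.isClosed_compl
      (disjoint_compl_right_iff_subset.mpr (Set.singleton_subset_iff.2 h1V))
  have g01 : g0 1 = 1 := g_one rfl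
  have g_nonneg : ∀ x, 0 ≤ g0 x := fun x => (g_mem x).1
  set ν : Measure G := 𝔥.inv with hν
  set D : G → ℝ := fun x => ∫ z, g0 (z⁻¹ * x) ∂ν with hD
  have D_cont : Continuous D := continuous_integral_apply_inv_mul g0.continuous g_comp
  have D_pos : ∀ x, 0 < D x := by
    intro x
    have Cc : Continuous fun y => g0 (y⁻¹ * x) :=
      g0.continuous.comp (continuous_inv.mul continuous_const)
    apply (integral_pos_iff_support_of_nonneg (fun y => g_nonneg _) ?_).2
    · apply Cc.isOpen_support.measure_pos ν
      exact ⟨x, by simp [g01]⟩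
    · apply Cc.integrable_of_hasCompactSupport
      exact g_comp.comp_homeomorph ((Homeomorph.inv G).trans (Homeomorph.mulRight x))
  obtain ⟨y₀, hy₀K, hy₀max⟩ := hK'.exists_isMaxOn hne D_cont.continuousOn
  set M : ℝ := D y₀ with hM
  have M_pos : 0 < M := D_pos y₀
  have Ig_pos : 0 < ∫ x, g0 x ∂𝔥 := by
    apply (integral_pos_iff_support_of_nonneg g_nonneg
      (g0.continuous.integrable_of_hasCompactSupport g_comp)).2
    exact g0.continuous.isOpen_support.measure_pos 𝔥 ⟨1, by simp [g01]⟩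
  refine ⟨M / ∫ x, g0 x ∂𝔥, by positivity, fun f hf h'f hf0 hsupp => ?_⟩
  have combo : ∫ x, f x ∂𝔥 = (∫ y, f y * (D y)⁻¹ ∂ν) * ∫ x, g0 x ∂𝔥 :=
    Measure.integral_isMulLeftInvariant_isMulRightInvariant_combo hf h'f
      g0.continuous g_comp g_nonneg (x₀ := 1) (by simp [g01])
  have int_fD : Integrable (fun y => f y * (D y)⁻¹) ν := by
    apply Continuous.integrable_of_hasCompactSupport
    · exact hf.mul (D_cont.inv₀ fun y => (D_pos y).ne')
    · exact h'f.mul_right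
  have ptwise : ∀ y, f y ≤ M * (f y * (D y)⁻¹) := by
    intro y
    by_cases hy : y ∈ tsupport f
    · have hDy : D y ≤ M := hy₀max (hsupp hy)
      have h1 : 1 ≤ M * (D y)⁻¹ := by
        rw [← div_eq_mul_inv, le_div_iff₀ (D_pos y), one_mul]
        exact hDy
      calc f y = f y * 1 := by ring
        _ ≤ f y * (M * (D y)⁻¹) := by
            apply mul_le_mul_of_nonneg_left h1 (hf0 y)
        _ = M * (f y * (D y)⁻¹) := by ring
    · have : f y = 0 := image_eq_zero_of_notMem_tsupport hy
      simp [this]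
  have step : ∫ x, f x ∂ν ≤ ∫ y, M * (f y * (D y)⁻¹) ∂ν := by
    apply integral_mono (hf.integrable_of_hasCompactSupport h'f) (int_fD.const_mul M) ptwise
  calc ∫ x, f x ∂ν ≤ ∫ y, M * (f y * (D y)⁻¹) ∂ν := step
    _ = M * ∫ y, f y * (D y)⁻¹ ∂ν := integral_const_mul _ _
    _ = M / (∫ x, g0 x ∂𝔥) * ∫ x, f x ∂𝔥 := by
        rw [combo]; field_simp

/-- Set form of the comparison for a regular Haar measure. -/
theorem aux_inv_le_of_regular (𝔥 : Measure G) [𝔥.IsHaarMeasure] [𝔥.Regular]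
    {T : Set G} (hT : IsCompact T) :
    ∃ C : ℝ≥0∞, C ≠ ⊤ ∧ ∀ E : Set G, E ⊆ T → 𝔥.inv E ≤ C * 𝔥 E := by
  obtain ⟨K', hK'comp, hK'int⟩ := exists_compact_superset hT
  obtain ⟨c, hc0, hc⟩ := aux_fun_ineq 𝔥 hK'comp
  refine ⟨ENNReal.ofReal c, ENNReal.ofReal_ne_top, ?_⟩
  have claim_open : ∀ O : Set G, O ⊆ interior K' → IsOpen O →
      𝔥.inv O ≤ ENNReal.ofReal c * 𝔥 O := by
    intro O hOW hO
    apply le_of_forall_lt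
    intro r hr
    obtain ⟨F, hFO, hFc, hrF⟩ := (Measure.Regular.innerRegular (μ := 𝔥.inv)) hO r hr
    obtain ⟨f, f_one, f_zero, f_comp, f_mem⟩ :=
      exists_continuous_one_zero_of_isCompact hFc hO.isClosed_compl
        (disjoint_compl_right_iff_subset.mpr hFO)
    have hsupp : tsupport f ⊆ K' := by
      apply closure_minimal _ hK'comp.isClosed
      intro x hx
      by_contra hxK
      exact hx (f_zero (fun hO' : x ∈ O => hxK (interior_subset (hOW hO'))))
    have h1 : 𝔥.inv F ≤ ENNReal.ofReal (∫ x, f x ∂𝔥.inv) :=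
      (f.continuous.integrable_of_hasCompactSupport f_comp).measure_le_integral
        (Filter.Eventually.of_forall fun x => (f_mem x).1) (fun x hx => by simp [f_one hx])
    have h2 : ∫ x, f x ∂𝔥.inv ≤ c * ∫ x, f x ∂𝔥 :=
      hc f f.continuous f_comp (fun x => (f_mem x).1) hsupp
    have h3 : ENNReal.ofReal (∫ x, f x ∂𝔥) ≤ 𝔥 O :=
      integral_le_measure (fun x _ => (f_mem x).2) (fun x hx => (f_zero hx).le)
    calc r < 𝔥.inv F := hrF
      _ ≤ ENNReal.ofReal (∫ x, f x ∂𝔥.inv) := h1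
      _ ≤ ENNReal.ofReal (c * ∫ x, f x ∂𝔥) := ENNReal.ofReal_le_ofReal h2
      _ = ENNReal.ofReal c * ENNReal.ofReal (∫ x, f x ∂𝔥) := ENNReal.ofReal_mul hc0
      _ ≤ ENNReal.ofReal c * 𝔥 O := mul_le_mul_right h3 _
  intro E hET
  set C : ℝ≥0∞ := ENNReal.ofReal c with hC
  have hCtop : C ≠ ⊤ := ENNReal.ofReal_ne_top
  have hEfin : 𝔥 E ≠ ⊤ := ((measure_mono hET).trans_lt hT.measure_lt_top).ne
  apply ENNReal.le_of_forall_pos_le_add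
  intro ε hε _
  have hδpos : (0 : ℝ≥0∞) < (ε : ℝ≥0∞) / (C + 1) := by
    apply ENNReal.div_pos (by exact_mod_cast hε.ne') (by finiteness)
  have hElt : 𝔥 E < 𝔥 E + (ε : ℝ≥0∞) / (C + 1) :=
    ENNReal.lt_add_right hEfin hδpos.ne'
  obtain ⟨U, hEU, hUopen, hUlt⟩ := E.exists_isOpen_lt_of_lt _ hElt
  calc 𝔥.inv E ≤ 𝔥.inv (U ∩ interior K') :=
        measure_mono (Set.subset_inter hEU (hET.trans hK'int))
    _ ≤ C * 𝔥 (U ∩ interior K') :=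
        claim_open _ Set.inter_subset_right (hUopen.inter isOpen_interior)
    _ ≤ C * 𝔥 U := mul_le_mul_right (measure_mono Set.inter_subset_left) _
    _ ≤ C * (𝔥 E + (ε : ℝ≥0∞) / (C + 1)) := mul_le_mul_right hUlt.le _
    _ = C * 𝔥 E + C * ((ε : ℝ≥0∞) / (C + 1)) := mul_add _ _ _
    _ ≤ C * 𝔥 E + (C + 1) * ((ε : ℝ≥0∞) / (C + 1)) := by
        gcongr; exact le_self_add
    _ ≤ C * 𝔥 E + ε := add_le_add_right ENNReal.mul_div_le _

/-- Comparison between `μ (E⁻¹)` and `μ E` for subsets of a fixed compact set, for an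
arbitrary Haar measure. -/
theorem aux_inv_le (μ : Measure G) [μ.IsHaarMeasure] {T : Set G} (hT : IsCompact T) :
    ∃ C : ℝ≥0∞, C ≠ ⊤ ∧ ∀ E : Set G, E ⊆ T → μ E⁻¹ ≤ C * μ E := by
  let 𝔥 : Measure G := Measure.haar
  obtain ⟨C, hCtop, h⟩ := aux_inv_le_of_regular 𝔥 hT
  refine ⟨C, hCtop, fun E hET => ?_⟩
  have hcl : IsCompact (closure E) := hT.closure_of_subset hET
  have hclinv : IsCompact (closure E⁻¹) := hT.inv.closure_of_subset (Set.inv_subset_inv.2 hET)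
  have e1 : μ E = Measure.haarScalarFactor μ 𝔥 • 𝔥 E :=
    Measure.measure_isMulInvariant_eq_smul_of_isCompact_closure μ 𝔥 hcl
  have e2 : μ E⁻¹ = Measure.haarScalarFactor μ 𝔥 • 𝔥 E⁻¹ :=
    Measure.measure_isMulInvariant_eq_smul_of_isCompact_closure μ 𝔥 hclinv
  have hinv : 𝔥 E⁻¹ = 𝔥.inv E := (Measure.inv_apply 𝔥 E).symm
  rw [e1, e2, hinv, ENNReal.smul_def, ENNReal.smul_def, smul_eq_mul, smul_eq_mul,
    mul_left_comm]
  exact mul_le_mul_right (h E hET) _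

/-- Change of variables `x ↦ x⁻¹` in a lower Lebesgue integral over a subset of a fixed
compact set, with a uniform constant. -/
theorem aux_lintegral_inv_le (μ : Measure G) [μ.IsHaarMeasure] {T : Set G}
    (hT : IsCompact T) :
    ∃ C : ℝ≥0∞, C ≠ ⊤ ∧ ∀ (g : G → ℝ≥0∞) (A : Set G), MeasurableSet A → A ⊆ T →
      ∫⁻ x in A, g x⁻¹ ∂μ ≤ C * ∫⁻ x in A⁻¹, g x ∂μ := by
  obtain ⟨C, hCtop, h⟩ := aux_inv_le μ hT.inv
  refine ⟨C, hCtop, fun g A hA hAT => ?_⟩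
  have hAinv : MeasurableSet (A⁻¹ : Set G) := hA.inv
  have hmeas_le : μ.inv.restrict A⁻¹ ≤ C • μ.restrict A⁻¹ := by
    apply Measure.le_intro
    intro s hs _
    rw [Measure.restrict_apply hs, Measure.smul_apply, Measure.restrict_apply hs,
      Measure.inv_apply, smul_eq_mul]
    exact h _ (Set.inter_subset_right.trans (Set.inv_subset_inv.2 hAT))
  have hpre : (Inv.inv ⁻¹' (A⁻¹ : Set G) : Set G) = A := by
    ext x; simp
  have key : ∫⁻ x in A, g x⁻¹ ∂μ = ∫⁻ x, g x ∂(μ.inv.restrict A⁻¹) := by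
    rw [Measure.inv_def, Measure.restrict_map measurable_inv hAinv, hpre]
    have : Measure.map Inv.inv (μ.restrict A)
        = Measure.map (MeasurableEquiv.inv G) (μ.restrict A) := rfl
    rw [this, lintegral_map_equiv]
    rfl
  calc ∫⁻ x in A, g x⁻¹ ∂μ = ∫⁻ x, g x ∂(μ.inv.restrict A⁻¹) := key
    _ ≤ ∫⁻ x, g x ∂(C • μ.restrict A⁻¹) := lintegral_mono' hmeas_le le_rfl
    _ = C * ∫⁻ x in A⁻¹, g x ∂μ := lintegral_smul_measure _ _

end Aux

/-- Lemma 3 of the paper: if a bounded `Γ ⊆ L¹(G;B)` can be uniformly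
approximated by convolutions `j⋆f` with `j ∈ L^∞(G)` of compact support, then
`Γ⁻ = {x ↦ f (x⁻¹) : f ∈ Γ}` is uniformly integrable on any compact `S ⊆ G`. -/
theorem uniformly_integrable_inverse_of_convolution_approx
    {G : Type*} [Group G] [TopologicalSpace G] [IsTopologicalGroup G]
    [LocallyCompactSpace G] [T2Space G] [MeasurableSpace G] [BorelSpace G]
    (μ : Measure G) [μ.IsHaarMeasure]
    {B : Type*} [NormedAddCommGroup B] [NormedSpace ℝ B] [CompleteSpace B]
    (Γ : Set (Lp B 1 μ)) (hΓ : Bornology.IsBounded Γ)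
    (S : Set G) (hS : IsCompact S)
    (happrox : ∀ ε : ℝ, 0 < ε → ∃ j : G → ℝ,
      MemLp j ∞ μ ∧ HasCompactSupport j ∧
      ∀ f ∈ Γ,
        eLpNorm (fun x => f x - ∫ y, j y • f (y⁻¹ * x) ∂μ) 1 μ < ENNReal.ofReal ε) :
    ∀ ε : ℝ, 0 < ε → ∃ δ : ℝ, 0 < δ ∧
      ∀ f ∈ Γ, ∀ A : Set G, A ⊆ S → MeasurableSet A → μ A < ENNReal.ofReal δ →
        (∫⁻ x in A, (‖f x⁻¹‖₊ : ℝ≥0∞) ∂μ) < ENNReal.ofReal ε := by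
  intro ε hε
  obtain ⟨R, hR⟩ := isBounded_iff_forall_norm_le.1 hΓ
  have hfR : ∀ f : Lp B 1 μ, f ∈ Γ → (∫⁻ x, (‖f x‖₊ : ℝ≥0∞) ∂μ) ≤ ENNReal.ofReal R := by
    intro f hf
    refine le_trans (eLpNorm_one_eq_lintegral_enorm (f := (f : G → B)) (μ := μ)).symm.le ?_
    have h2 : eLpNorm (f : G → B) 1 μ ≠ ⊤ := Lp.eLpNorm_ne_top f
    have h3 : (eLpNorm (f : G → B) 1 μ).toReal ≤ R := by
      rw [← Lp.norm_def]; exact hR f hf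
    calc eLpNorm (f : G → B) 1 μ = ENNReal.ofReal (eLpNorm (f : G → B) 1 μ).toReal :=
          (ENNReal.ofReal_toReal h2).symm
      _ ≤ ENNReal.ofReal R := ENNReal.ofReal_le_ofReal h3
  obtain ⟨C₁, hC₁top, hC₁⟩ := aux_lintegral_inv_le μ hS
  set ε' : ℝ := ε / (4 * (C₁.toReal + 1)) with hε'def
  have hC₁0 : 0 ≤ C₁.toReal := ENNReal.toReal_nonneg
  have hε'pos : 0 < ε' := by positivity
  obtain ⟨j, hjmem, hjsupp, hjΓ⟩ := happrox ε' hε'pos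
  set K : Set G := tsupport j with hKdef
  have hK : IsCompact K := hjsupp
  have hSK : IsCompact (S * K) := hS.mul hK
  obtain ⟨C₂, hC₂top, hC₂⟩ := aux_lintegral_inv_le μ hSK
  set J : ℝ≥0∞ := eLpNorm j ∞ μ with hJdef
  have hJtop : J ≠ ⊤ := hjmem.eLpNorm_ne_top
  set Bd : ℝ≥0∞ := J * (C₂ * ENNReal.ofReal R) with hBddef
  have hBdtop : Bd ≠ ⊤ := by
    apply ENNReal.mul_ne_top hJtop
    exact ENNReal.mul_ne_top hC₂top ENNReal.ofReal_ne_top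
  have hBd0 : 0 ≤ Bd.toReal := ENNReal.toReal_nonneg
  refine ⟨ε / (4 * (Bd.toReal + 1)), by positivity, ?_⟩
  intro f hf A hAS hA hAμ
  -- pointwise bound on the convolution term
  have convBound : ∀ x ∈ A, (‖∫ y, j y • f (y⁻¹ * x⁻¹) ∂μ‖₊ : ℝ≥0∞) ≤ Bd := by
    intro x hx
    have hxS : x ∈ S := hAS hx
    have hjae : ∀ᵐ y ∂μ, (‖j y‖₊ : ℝ≥0∞) ≤ J := by
      have := enorm_ae_le_eLpNormEssSup j μ
      filter_upwards [this] with y hy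
      rw [hJdef, eLpNorm_exponent_top]
      exact hy
    have inner1 : (‖∫ y, j y • f (y⁻¹ * x⁻¹) ∂μ‖₊ : ℝ≥0∞)
        ≤ ∫⁻ y, (‖j y‖₊ : ℝ≥0∞) * (‖f (y⁻¹ * x⁻¹)‖₊ : ℝ≥0∞) ∂μ := by
      refine (enorm_integral_le_lintegral_enorm _).trans_eq ?_
      congr 1
      ext y
      exact enorm_smul _ _
    have inner2 : ∫⁻ y, (‖j y‖₊ : ℝ≥0∞) * (‖f (y⁻¹ * x⁻¹)‖₊ : ℝ≥0∞) ∂μ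
        ≤ J * ∫⁻ y, K.indicator (fun y => (‖f (y⁻¹ * x⁻¹)‖₊ : ℝ≥0∞)) y ∂μ := by
      rw [← lintegral_const_mul' _ _ hJtop]
      apply lintegral_mono_ae
      filter_upwards [hjae] with y hy
      by_cases hyK : y ∈ K
      · rw [Set.indicator_of_mem hyK]
        exact mul_le_mul_left hy _
      · have : j y = 0 := image_eq_zero_of_notMem_tsupport hyK
        simp [this, Set.indicator_of_notMem hyK]
    have inner3 : ∫⁻ y, K.indicator (fun y => (‖f (y⁻¹ * x⁻¹)‖₊ : ℝ≥0∞)) y ∂μ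
        ≤ ∫⁻ y in S * K, (‖f y⁻¹‖₊ : ℝ≥0∞) ∂μ := by
      rw [← lintegral_indicator hSK.isClosed.measurableSet]
      rw [← lintegral_mul_left_eq_self
        (f := fun y => K.indicator (fun y => (‖f (y⁻¹ * x⁻¹)‖₊ : ℝ≥0∞)) y) x⁻¹]
      apply lintegral_mono
      intro y
      dsimp only
      by_cases hyK : x⁻¹ * y ∈ K
      · rw [Set.indicator_of_mem hyK]
        have hySK : y ∈ S * K := by
          have : y = x * (x⁻¹ * y) := by group
          rw [this]
          exact Set.mul_mem_mul hxS hyK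
        rw [Set.indicator_of_mem hySK]
        have : (x⁻¹ * y)⁻¹ * x⁻¹ = y⁻¹ := by group
        rw [this]
      · rw [Set.indicator_of_notMem hyK]
        exact zero_le
    have inner4 : ∫⁻ y in S * K, (‖f y⁻¹‖₊ : ℝ≥0∞) ∂μ
        ≤ C₂ * ∫⁻ y, (‖f y‖₊ : ℝ≥0∞) ∂μ := by
      refine (hC₂ (fun y => (‖f y‖₊ : ℝ≥0∞)) (S * K) hSK.isClosed.measurableSet
        subset_rfl).trans ?_
      exact mul_le_mul_right (lintegral_mono' Measure.restrict_le_self le_rfl) _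
    calc (‖∫ y, j y • f (y⁻¹ * x⁻¹) ∂μ‖₊ : ℝ≥0∞)
        ≤ ∫⁻ y, (‖j y‖₊ : ℝ≥0∞) * (‖f (y⁻¹ * x⁻¹)‖₊ : ℝ≥0∞) ∂μ := inner1
      _ ≤ J * ∫⁻ y, K.indicator (fun y => (‖f (y⁻¹ * x⁻¹)‖₊ : ℝ≥0∞)) y ∂μ := inner2
      _ ≤ J * (C₂ * ∫⁻ y, (‖f y‖₊ : ℝ≥0∞) ∂μ) := by
          apply mul_le_mul_right
          exact inner3.trans inner4 |>.trans_eq rfl |>.trans le_rfl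
      _ ≤ Bd := by
          rw [hBddef]
          apply mul_le_mul_right
          exact mul_le_mul_right (hfR f hf) _
  -- triangle inequality
  set h : G → B := fun x => f x - ∫ y, j y • f (y⁻¹ * x) ∂μ with hhdef
  have tri : ∀ x ∈ A, (‖f x⁻¹‖₊ : ℝ≥0∞) ≤ Bd + (‖h x⁻¹‖₊ : ℝ≥0∞) := by
    intro x hx
    have hdecomp : f x⁻¹ = (∫ y, j y • f (y⁻¹ * x⁻¹) ∂μ) + h x⁻¹ := by
      simp [hhdef]
    calc (‖f x⁻¹‖₊ : ℝ≥0∞)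
        ≤ (‖∫ y, j y • f (y⁻¹ * x⁻¹) ∂μ‖₊ : ℝ≥0∞) + (‖h x⁻¹‖₊ : ℝ≥0∞) := by
          rw [hdecomp]
          exact_mod_cast nnnorm_add_le _ _
      _ ≤ Bd + (‖h x⁻¹‖₊ : ℝ≥0∞) := add_le_add_left (convBound x hx) _
  have step1 : ∫⁻ x in A, (‖f x⁻¹‖₊ : ℝ≥0∞) ∂μ
      ≤ ∫⁻ x in A, (Bd + (‖h x⁻¹‖₊ : ℝ≥0∞)) ∂μ :=
    lintegral_mono_ae ((ae_restrict_iff' hA).2 (Filter.Eventually.of_forall tri))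
  have step2 : ∫⁻ x in A, (Bd + (‖h x⁻¹‖₊ : ℝ≥0∞)) ∂μ
      = Bd * μ A + ∫⁻ x in A, (‖h x⁻¹‖₊ : ℝ≥0∞) ∂μ := by
    rw [lintegral_add_left measurable_const, setLIntegral_const]
  have step3 : ∫⁻ x in A, (‖h x⁻¹‖₊ : ℝ≥0∞) ∂μ ≤ C₁ * ENNReal.ofReal ε' := by
    refine (hC₁ (fun x => (‖h x‖₊ : ℝ≥0∞)) A hA hAS).trans ?_
    apply mul_le_mul_right
    refine (lintegral_mono' Measure.restrict_le_self le_rfl).trans ?_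
    refine le_trans (eLpNorm_one_eq_lintegral_enorm (f := h) (μ := μ)).symm.le ?_
    exact (hjΓ f hf).le
  -- final arithmetic
  have final1 : Bd * μ A ≤ ENNReal.ofReal (ε / 4) := by
    calc Bd * μ A ≤ Bd * ENNReal.ofReal (ε / (4 * (Bd.toReal + 1))) :=
          mul_le_mul_right hAμ.le _
      _ = ENNReal.ofReal Bd.toReal * ENNReal.ofReal (ε / (4 * (Bd.toReal + 1))) := by
          rw [ENNReal.ofReal_toReal hBdtop]
      _ = ENNReal.ofReal (Bd.toReal * (ε / (4 * (Bd.toReal + 1)))) :=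
          (ENNReal.ofReal_mul hBd0).symm
      _ ≤ ENNReal.ofReal (ε / 4) := by
          apply ENNReal.ofReal_le_ofReal
          rw [mul_div_assoc', div_le_div_iff₀ (by positivity) (by norm_num)]
          nlinarith [hε.le, hBd0]
  have final2 : C₁ * ENNReal.ofReal ε' ≤ ENNReal.ofReal (ε / 4) := by
    calc C₁ * ENNReal.ofReal ε'
        = ENNReal.ofReal C₁.toReal * ENNReal.ofReal ε' := by
          rw [ENNReal.ofReal_toReal hC₁top]
      _ = ENNReal.ofReal (C₁.toReal * ε') := (ENNReal.ofReal_mul hC₁0).symm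
      _ ≤ ENNReal.ofReal (ε / 4) := by
          apply ENNReal.ofReal_le_ofReal
          rw [hε'def, mul_div_assoc', div_le_div_iff₀ (by positivity) (by norm_num)]
          nlinarith [hε.le, hC₁0]
  calc ∫⁻ x in A, (‖f x⁻¹‖₊ : ℝ≥0∞) ∂μ
      ≤ Bd * μ A + ∫⁻ x in A, (‖h x⁻¹‖₊ : ℝ≥0∞) ∂μ := step1.trans_eq step2
    _ ≤ ENNReal.ofReal (ε / 4) + ENNReal.ofReal (ε / 4) :=
        add_le_add final1 (step3.trans final2)
    _ = ENNReal.ofReal (ε / 2) := by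
        rw [← ENNReal.ofReal_add (by positivity) (by positivity)]
        ring_nf
    _ < ENNReal.ofReal ε := by
        rw [ENNReal.ofReal_lt_ofReal_iff hε]
        linarith
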